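/- Let S ⊆ ℕ^n be a good semigroup, let T_i be the Arf closure of the numerical semigroup S_i = π_i(S) for each i, and let U be any Arf good semigroup with S ⊆ U ⊆ ∏_i T_i. Then π_i(U) = T_i for all i. -/

import Mathlib

/-- A good semigroup of `ℕ^n`: a submonoid satisfying (G1), (G2), (G3). -/
def IsGoodSemigroup {n : ℕ} (S : Set (Fin n → ℕ)) : Prop :=
  0 ∈ S ∧ (∀ a ∈ S, ∀ b ∈ S, a + b ∈ S) ∧
  (∀ a ∈ S, ∀ b ∈ S, a ⊓ b ∈ S) ∧
  (∀ a ∈ S, ∀ b ∈ S, ∀ i, a i = b i →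
    ∃ c ∈ S, a i < c i ∧ (∀ j, j ≠ i → min (a j) (b j) ≤ c j) ∧
      (∀ j, j ≠ i → a j ≠ b j → c j = min (a j) (b j))) ∧
  (∃ C, ∀ x, C ≤ x → x ∈ S)

/-- `C` is the conductor of `S ⊆ ℕ^n`. -/
def IsConductor {n : ℕ} (S : Set (Fin n → ℕ)) (C : Fin n → ℕ) : Prop :=
  (∀ x, C ≤ x → x ∈ S) ∧ ∀ C', (∀ x, C' ≤ x → x ∈ S) → C ≤ C'

/-- The Arf property for a subsemigroup of `ℕ^n`. -/
def IsArf {n : ℕ} (S : Set (Fin n → ℕ)) : Prop :=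
  ∀ a ∈ S, ∀ b ∈ S, ∀ c ∈ S, a ≤ b → a ≤ c → b + c - a ∈ S

/-- A numerical semigroup, as a subset of `ℕ`. -/
def IsNumSgp (N : Set ℕ) : Prop :=
  0 ∈ N ∧ (∀ a ∈ N, ∀ b ∈ N, a + b ∈ N) ∧ ∃ c : ℕ, ∀ x, c ≤ x → x ∈ N

/-- The Arf property for a numerical semigroup. -/
def IsArfNum (N : Set ℕ) : Prop :=
  ∀ a ∈ N, ∀ b ∈ N, ∀ c ∈ N, c ≤ a → c ≤ b → a + b - c ∈ N

/-- `T` is the Arf closure of `M`: the smallest Arf numerical semigroup containing `M`. -/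
def IsArfClosure (M T : Set ℕ) : Prop :=
  IsNumSgp T ∧ IsArfNum T ∧ M ⊆ T ∧
    ∀ T', IsNumSgp T' → IsArfNum T' → M ⊆ T' → T ⊆ T'

theorem proj_of_intermediate_arf_good {n : ℕ} (S : Set (Fin n → ℕ))
    (hS : IsGoodSemigroup S)
    (T : Fin n → Set ℕ)
    (hT : ∀ i, IsArfClosure ((fun v => v i) '' S) (T i))
    (U : Set (Fin n → ℕ)) (hU : IsGoodSemigroup U) (hUarf : IsArf U)
    (hSU : S ⊆ U) (hUT : U ⊆ {v | ∀ i, v i ∈ T i}) :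
    ∀ i, (fun v => v i) '' U = T i := by
  intro i
  obtain ⟨hU0, hUadd, hUinf, _, C, hC⟩ := hU
  apply Set.Subset.antisymm
  · rintro _ ⟨v, hv, rfl⟩
    exact hUT hv i
  · -- π_i(U) is an Arf numerical semigroup containing S_i
    have hnum : IsNumSgp ((fun v => v i) '' U) := by
      refine ⟨⟨0, hU0, rfl⟩, ?_, ⟨C i, ?_⟩⟩
      · rintro _ ⟨u, hu, rfl⟩ _ ⟨v, hv, rfl⟩
        exact ⟨u + v, hUadd u hu v hv, rfl⟩
      · intro x hx
        refine ⟨fun j => if j = i then x else C j, hC _ ?_, by simp⟩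
        intro j
        by_cases h : j = i <;> simp [h]
        exact h ▸ hx
    have harf : IsArfNum ((fun v => v i) '' U) := by
      rintro _ ⟨u, hu, rfl⟩ _ ⟨v, hv, rfl⟩ _ ⟨w, hw, rfl⟩ hca hcb
      simp only at hca hcb
      set w' := w ⊓ (u ⊓ v) with hw'
      have hw'U : w' ∈ U := hUinf w hw _ (hUinf u hu v hv)
      have h1 : w' ≤ u := fun j => le_trans (inf_le_right) (inf_le_left)
      have h2 : w' ≤ v := fun j => le_trans (inf_le_right) (inf_le_right)
      have hmem := hUarf w' hw'U u hu v hv h1 h2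
      refine ⟨u + v - w', hmem, ?_⟩
      show (u + v - w') i = u i + v i - w i
      have hwi : w' i = w i := by
        have : w' i = min (w i) (min (u i) (v i)) := rfl
        omega
      simp only [Pi.sub_apply, Pi.add_apply, hwi]
    have hsub : ((fun v => v i) '' S) ⊆ ((fun v => v i) '' U) :=
      Set.image_mono hSU
    exact (hT i).2.2.2 _ hnum harf hsub
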